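/- Let I and Λ be finite sets of sizes a > 1 and b > 1 respectively. Then for any finite group G and any Λ×I matrix P with entries in G, B(a)B(b)/(2^(a²−a) · 2^(b²−b)) ≤ χ(M[G;I,Λ;P]) < 1. -/

import Mathlib

set_option linter.unusedSectionVars false


/-- A relation `ρ` is a *diagonal subsemigroup* with respect to multiplication `mul`:
it is reflexive and compatible with `mul`. -/
def IsDiagonal {S : Type*} (mul : S → S → S) (ρ : S → S → Prop) : Prop :=
  (∀ s, ρ s s) ∧ ∀ a b c d, ρ a b → ρ c d → ρ (mul a c) (mul b d)

/-- A relation `ρ` is a *congruence* with respect to `mul`. -/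
def IsCongruence {S : Type*} (mul : S → S → S) (ρ : S → S → Prop) : Prop :=
  Equivalence ρ ∧ ∀ a b c d, ρ a b → ρ c d → ρ (mul a c) (mul b d)

/-- The DSC coefficient: the number of congruences divided by the number of
diagonal subsemigroups. -/
noncomputable def chi {S : Type*} (mul : S → S → S) : ℚ :=
  (Nat.card {ρ : S → S → Prop // IsCongruence mul ρ} : ℚ) /
  (Nat.card {ρ : S → S → Prop // IsDiagonal mul ρ} : ℚ)

/-- The `m`-th Bell number: the number of equivalence relations on a set of size `m`. -/
noncomputable def bell (m : ℕ) : ℕ := Nat.card (Setoid (Fin m))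

/-- Multiplication of the Rees matrix semigroup `M[G;I,Λ;P]` on `I × G × Λ`:
`(i,g,λ)(j,h,μ) = (i, g * p_{λ j} * h, μ)`. -/
def rmul {G I Λ : Type*} [Group G] (P : Λ → I → G) (x y : I × G × Λ) : I × G × Λ :=
  ⟨x.1, x.2.1 * P x.2.2 y.1 * y.2.1, y.2.2⟩

namespace DSC

section helpers
variable {H : Type*} [Group H]

lemma quot_c_eq {G : Type*} [Group G] (N : Subgroup G) [N.Normal] {a c b : G}
    (h : a * c * b⁻¹ ∈ N) : (c : G ⧸ N) = (a : G ⧸ N)⁻¹ * (b : G ⧸ N) := by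
  have h1 : ((a * c * b⁻¹ : G) : G ⧸ N) = 1 := (QuotientGroup.eq_one_iff _).mpr h
  simp only [QuotientGroup.mk_mul, QuotientGroup.mk_inv] at h1
  have : (c : G ⧸ N) = (a : G ⧸ N)⁻¹ * ((a : G ⧸ N) * c * (b : G ⧸ N)⁻¹) * b := by group
  rw [h1] at this; rw [this]; group

lemma quot_d_eq {G : Type*} [Group G] (N : Subgroup G) [N.Normal] {a d b : G}
    (h : a⁻¹ * d * b ∈ N) : (d : G ⧸ N) = (a : G ⧸ N) * (b : G ⧸ N)⁻¹ := by
  have h1 : ((a⁻¹ * d * b : G) : G ⧸ N) = 1 := (QuotientGroup.eq_one_iff _).mpr h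
  simp only [QuotientGroup.mk_mul, QuotientGroup.mk_inv] at h1
  have : (d : G ⧸ N) = (a : G ⧸ N) * ((a : G ⧸ N)⁻¹ * d * (b : G ⧸ N)) * (b : G ⧸ N)⁻¹ := by
    group
  rw [h1] at this; rw [this]; group

end helpers

section core
variable {I Λ G : Type*} [Group G] (P : Λ → I → G) (i₀ : I) (κ₀ : Λ)

/-- canonical "normalized coordinate" of an element, in `G ⧸ N`. -/
def Fm (N : Subgroup G) : I × G × Λ → G ⧸ N :=
  fun s => ((P κ₀ s.1 * s.2.1 * P s.2.2 i₀ : G) : G ⧸ N)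

/-- the largest equivalence on `I` linked with `N`. -/
def ThI (N : Subgroup G) [N.Normal] : I → I → Prop := fun i j =>
  ∀ κ : Λ, ((P κ j : G) : G ⧸ N)⁻¹ * ((P κ i : G) : G ⧸ N)
    = ((P κ₀ j : G) : G ⧸ N)⁻¹ * ((P κ₀ i : G) : G ⧸ N)

/-- the largest equivalence on `Λ` linked with `N`. -/
def ThL (N : Subgroup G) [N.Normal] : Λ → Λ → Prop := fun l m =>
  ∀ k : I, ((P l k : G) : G ⧸ N) * ((P m k : G) : G ⧸ N)⁻¹
    = ((P l i₀ : G) : G ⧸ N) * ((P m i₀ : G) : G ⧸ N)⁻¹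

lemma thI_equiv (N : Subgroup G) [N.Normal] : Equivalence (ThI P κ₀ N) := by
  constructor
  · intro i κ; group
  · intro i j h κ
    have h1 := h κ; have h2 := h κ₀
    have e1 : ((P κ i : G) : G ⧸ N)⁻¹ * ((P κ j : G) : G ⧸ N)
        = (((P κ j : G) : G ⧸ N)⁻¹ * ((P κ i : G) : G ⧸ N))⁻¹ := by group
    rw [e1, h1]
    group
  · intro i j k hij hjk κ
    have e1 : ((P κ k : G) : G ⧸ N)⁻¹ * ((P κ i : G) : G ⧸ N)
        = (((P κ k : G) : G ⧸ N)⁻¹ * ((P κ j : G) : G ⧸ N))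
          * (((P κ j : G) : G ⧸ N)⁻¹ * ((P κ i : G) : G ⧸ N)) := by group
    rw [e1, hij κ, hjk κ]
    group

lemma thL_equiv (N : Subgroup G) [N.Normal] : Equivalence (ThL P i₀ N) := by
  constructor
  · intro l k; group
  · intro l m h k
    have h1 := h k
    have e1 : ((P m k : G) : G ⧸ N) * ((P l k : G) : G ⧸ N)⁻¹
        = (((P l k : G) : G ⧸ N) * ((P m k : G) : G ⧸ N)⁻¹)⁻¹ := by group
    rw [e1, h1]
    group
  · intro l m o hlm hmo k
    have e1 : ((P l k : G) : G ⧸ N) * ((P o k : G) : G ⧸ N)⁻¹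
        = (((P l k : G) : G ⧸ N) * ((P m k : G) : G ⧸ N)⁻¹)
          * (((P m k : G) : G ⧸ N) * ((P o k : G) : G ⧸ N)⁻¹) := by group
    rw [e1, hlm k, hmo k]
    group

/-- the congruence attached to a linked triple. -/
def crel (N : Subgroup G) (ε : I → I → Prop) (δ : Λ → Λ → Prop) :
    (I × G × Λ) → (I × G × Λ) → Prop :=
  fun s t => ε s.1 t.1 ∧ δ s.2.2 t.2.2 ∧ Fm P i₀ κ₀ N s = Fm P i₀ κ₀ N t

lemma crel_isCongruence (N : Subgroup G) [N.Normal] {ε : I → I → Prop} {δ : Λ → Λ → Prop}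
    (hε : Equivalence ε) (hδ : Equivalence δ)
    (hεΘ : ∀ i j, ε i j → ThI P κ₀ N i j) (hδΘ : ∀ l m, δ l m → ThL P i₀ N l m) :
    IsCongruence (rmul P) (crel P i₀ κ₀ N ε δ) := by
  constructor
  · exact ⟨fun s => ⟨hε.refl _, hδ.refl _, rfl⟩,
      fun h => ⟨hε.symm h.1, hδ.symm h.2.1, h.2.2.symm⟩,
      fun h h' => ⟨hε.trans h.1 h'.1, hδ.trans h.2.1 h'.2.1, h.2.2.trans h'.2.2⟩⟩
  · rintro ⟨i, x, l⟩ ⟨j, y, m⟩ ⟨i', x', l'⟩ ⟨j', y', m'⟩ ⟨hij, hlm, hF⟩ ⟨hij', hlm', hF'⟩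
    refine ⟨hij, hlm', ?_⟩
    simp only [Fm, rmul, QuotientGroup.mk_mul] at hF hF' ⊢
    have hΘL := hδΘ _ _ hlm i'
    have hΘI := hεΘ _ _ hij' m
    -- solve for the atoms appearing only on one side
    have e1 : ((P l i' : G) : G ⧸ N)
        = (((P l i' : G) : G ⧸ N) * ((P m i' : G) : G ⧸ N)⁻¹) * ((P m i' : G) : G ⧸ N) := by
      group
    rw [hΘL] at e1
    have e2 : ((P m i' : G) : G ⧸ N)
        = ((P m j' : G) : G ⧸ N) * (((P m j' : G) : G ⧸ N)⁻¹ * ((P m i' : G) : G ⧸ N)) := by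
      group
    rw [hΘI] at e2
    have e2' : ((P m j' : G) : G ⧸ N)
        = ((P m i' : G) : G ⧸ N) * ((P κ₀ i' : G) : G ⧸ N)⁻¹ * ((P κ₀ j' : G) : G ⧸ N) := by
      rw [e2]; group
    have ey : ((y : G) : G ⧸ N)
        = ((P κ₀ j : G) : G ⧸ N)⁻¹
          * (((P κ₀ j : G) : G ⧸ N) * y * ((P m i₀ : G) : G ⧸ N))
          * ((P m i₀ : G) : G ⧸ N)⁻¹ := by group
    rw [← hF] at ey
    have ey' : ((y' : G) : G ⧸ N)
        = ((P κ₀ j' : G) : G ⧸ N)⁻¹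
          * (((P κ₀ j' : G) : G ⧸ N) * y' * ((P m' i₀ : G) : G ⧸ N))
          * ((P m' i₀ : G) : G ⧸ N)⁻¹ := by group
    rw [← hF'] at ey'
    rw [e1, e2', ey, ey']
    group


section diag
variable {ρ : (I × G × Λ) → (I × G × Λ) → Prop}

/-- component relation on `I`. -/
def RI (ρ : (I × G × Λ) → (I × G × Λ) → Prop) : I → I → Prop :=
  fun i j => ∃ x l y m, ρ (i, x, l) (j, y, m)

/-- component relation on `Λ`. -/
def RL (ρ : (I × G × Λ) → (I × G × Λ) → Prop) : Λ → Λ → Prop :=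
  fun l m => ∃ i x j y, ρ (i, x, l) (j, y, m)

variable (hρ : IsDiagonal (rmul P) ρ)
include i₀ κ₀ hρ

lemma RI_refl (i : I) : RI ρ i i := ⟨1, κ₀, 1, κ₀, hρ.1 _⟩

lemma RL_refl (l : Λ) : RL ρ l l := ⟨i₀, 1, i₀, 1, hρ.1 _⟩

lemma S1 {i j : I} {x y : G} {l m : Λ} (h : ρ (i, x, l) (j, y, m)) (ν : Λ) (w : G) :
    ρ (i, w, ν) (j, (y * P m i₀ * (P l i₀)⁻¹ * x⁻¹) * w, ν) := by
  have h2 := hρ.2 _ _ _ _ h (hρ.1 (i₀, (P l i₀)⁻¹ * x⁻¹ * w, ν))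
  simp only [rmul] at h2
  have e1 : x * P l i₀ * ((P l i₀)⁻¹ * x⁻¹ * w) = w := by group
  have e2 : y * P m i₀ * ((P l i₀)⁻¹ * x⁻¹ * w) = (y * P m i₀ * (P l i₀)⁻¹ * x⁻¹) * w := by
    group
  rwa [e1, e2] at h2

lemma S1' {i j : I} {x y : G} {l m : Λ} (h : ρ (i, x, l) (j, y, m)) (l' : I) (w : G) :
    ρ (l', w, l) (l', w * (x⁻¹ * (P κ₀ i)⁻¹ * P κ₀ j * y), m) := by
  have h2 := hρ.2 _ _ _ _ (hρ.1 (l', w * x⁻¹ * (P κ₀ i)⁻¹, κ₀)) h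
  simp only [rmul] at h2
  have e1 : w * x⁻¹ * (P κ₀ i)⁻¹ * P κ₀ i * x = w := by group
  have e2 : w * x⁻¹ * (P κ₀ i)⁻¹ * P κ₀ j * y = w * (x⁻¹ * (P κ₀ i)⁻¹ * P κ₀ j * y) := by group
  rwa [e1, e2] at h2

lemma S2 {i j : I} {x y : G} {l m : Λ} (h : ρ (i, x, l) (j, y, m)) (l' : I) (ν : Λ)
    (w u : G) (κ : Λ) :
    ρ (l', w, ν) (l', u * (P κ j * (y * P m i₀ * (P l i₀)⁻¹ * x⁻¹) * (P κ i)⁻¹) * u⁻¹ * w, ν) := by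
  have hS := S1 P i₀ κ₀ hρ h ν ((u * P κ i)⁻¹ * w)
  have h2 := hρ.2 _ _ _ _ (hρ.1 (l', u, κ)) hS
  simp only [rmul] at h2
  have e1 : u * P κ i * ((u * P κ i)⁻¹ * w) = w := by group
  have e2 : u * P κ j * ((y * P m i₀ * (P l i₀)⁻¹ * x⁻¹) * ((u * P κ i)⁻¹ * w))
      = u * (P κ j * (y * P m i₀ * (P l i₀)⁻¹ * x⁻¹) * (P κ i)⁻¹) * u⁻¹ * w := by group
  rwa [e1, e2] at h2

variable [Fintype G]

/-- The normal subgroup attached to a diagonal subsemigroup. -/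
def ND : Subgroup G where
  carrier := {n : G | ρ (i₀, (P κ₀ i₀)⁻¹, κ₀) (i₀, (P κ₀ i₀)⁻¹ * n, κ₀)}
  one_mem' := by simpa using hρ.1 (i₀, (P κ₀ i₀)⁻¹, κ₀)
  mul_mem' := by
    intro n m hn hm
    simp only [Set.mem_setOf_eq] at *
    have h2 := hρ.2 _ _ _ _ hn hm
    simp only [rmul] at h2
    have e1 : (P κ₀ i₀)⁻¹ * P κ₀ i₀ * (P κ₀ i₀)⁻¹ = (P κ₀ i₀)⁻¹ := by group
    have e2 : (P κ₀ i₀)⁻¹ * n * P κ₀ i₀ * ((P κ₀ i₀)⁻¹ * m) = (P κ₀ i₀)⁻¹ * (n * m) := by group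
    rwa [e1, e2] at h2
  inv_mem' := by
    intro n hn
    simp only [Set.mem_setOf_eq] at *
    have hpow : ∀ k : ℕ, ρ (i₀, (P κ₀ i₀)⁻¹, κ₀) (i₀, (P κ₀ i₀)⁻¹ * n ^ k, κ₀) := by
      intro k
      induction k with
      | zero => simpa using hρ.1 (i₀, (P κ₀ i₀)⁻¹, κ₀)
      | succ k ih =>
        have h2 := hρ.2 _ _ _ _ ih hn
        simp only [rmul] at h2
        have e1 : (P κ₀ i₀)⁻¹ * P κ₀ i₀ * (P κ₀ i₀)⁻¹ = (P κ₀ i₀)⁻¹ := by group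
        have e2 : (P κ₀ i₀)⁻¹ * n ^ k * P κ₀ i₀ * ((P κ₀ i₀)⁻¹ * n)
            = (P κ₀ i₀)⁻¹ * n ^ (k + 1) := by rw [pow_succ]; group
        rwa [e1, e2] at h2
    have h1 : n * n ^ (orderOf n - 1) = 1 := by
      rw [← pow_succ', Nat.sub_add_cancel (orderOf_pos n)]
      exact pow_orderOf_eq_one n
    have h2 : n⁻¹ = n ^ (orderOf n - 1) := inv_eq_of_mul_eq_one_right h1
    rw [h2]; exact hpow _

lemma mem_ND_iff {n : G} :
    n ∈ ND P i₀ κ₀ hρ ↔ ρ (i₀, (P κ₀ i₀)⁻¹, κ₀) (i₀, (P κ₀ i₀)⁻¹ * n, κ₀) := Iff.rfl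

lemma ND_normal : (ND P i₀ κ₀ hρ).Normal := by
  constructor
  intro n hn g
  rw [mem_ND_iff] at hn ⊢
  have h2 := S2 P i₀ κ₀ hρ hn i₀ κ₀ ((P κ₀ i₀)⁻¹) ((P κ₀ i₀)⁻¹ * g) κ₀
  have e : (P κ₀ i₀)⁻¹ * g
        * (P κ₀ i₀ * ((P κ₀ i₀)⁻¹ * n * P κ₀ i₀ * (P κ₀ i₀)⁻¹ * ((P κ₀ i₀)⁻¹)⁻¹) * (P κ₀ i₀)⁻¹)
        * ((P κ₀ i₀)⁻¹ * g)⁻¹ * (P κ₀ i₀)⁻¹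
      = (P κ₀ i₀)⁻¹ * (g * n * g⁻¹) := by group
  rwa [e] at h2

lemma TN {n : G} (hn : n ∈ ND P i₀ κ₀ hρ) (l' : I) (ν : Λ) (w : G) :
    ρ (l', w, ν) (l', n * w, ν) := by
  rw [mem_ND_iff] at hn
  have h2 := S2 P i₀ κ₀ hρ hn l' ν w 1 κ₀
  have e : 1 * (P κ₀ i₀ * ((P κ₀ i₀)⁻¹ * n * P κ₀ i₀ * (P κ₀ i₀)⁻¹ * ((P κ₀ i₀)⁻¹)⁻¹)
        * (P κ₀ i₀)⁻¹) * 1⁻¹ * w = n * w := by group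
  rwa [e] at h2

lemma Smem {i j : I} {x y : G} {l m : Λ} (h : ρ (i, x, l) (j, y, m)) (v : G) (κ : Λ) :
    v * (P κ j * (y * P m i₀ * (P l i₀)⁻¹ * x⁻¹) * (P κ i)⁻¹) * v⁻¹ ∈ ND P i₀ κ₀ hρ := by
  rw [mem_ND_iff]
  have h2 := S2 P i₀ κ₀ hρ h i₀ κ₀ ((P κ₀ i₀)⁻¹) ((P κ₀ i₀)⁻¹ * v) κ
  have e : (P κ₀ i₀)⁻¹ * v * (P κ j * (y * P m i₀ * (P l i₀)⁻¹ * x⁻¹) * (P κ i)⁻¹)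
        * ((P κ₀ i₀)⁻¹ * v)⁻¹ * (P κ₀ i₀)⁻¹
      = (P κ₀ i₀)⁻¹ * (v * (P κ j * (y * P m i₀ * (P l i₀)⁻¹ * x⁻¹) * (P κ i)⁻¹) * v⁻¹) := by
    group
  rwa [e] at h2

lemma Smem' {i j : I} {x y : G} {l m : Λ} (h : ρ (i, x, l) (j, y, m)) (v : G) (k : I) :
    v * ((P l k)⁻¹ * (x⁻¹ * (P κ₀ i)⁻¹ * P κ₀ j * y) * P m k) * v⁻¹ ∈ ND P i₀ κ₀ hρ := by
  rw [mem_ND_iff]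
  have hS := S1' P i₀ κ₀ hρ h i₀ ((P κ₀ i₀)⁻¹ * v * (P l k)⁻¹)
  have h2 := hρ.2 _ _ _ _ hS (hρ.1 (k, v⁻¹, κ₀))
  simp only [rmul] at h2
  have e1 : (P κ₀ i₀)⁻¹ * v * (P l k)⁻¹ * P l k * v⁻¹ = (P κ₀ i₀)⁻¹ := by group
  have e2 : (P κ₀ i₀)⁻¹ * v * (P l k)⁻¹ * (x⁻¹ * (P κ₀ i)⁻¹ * P κ₀ j * y) * P m k * v⁻¹
      = (P κ₀ i₀)⁻¹ * (v * ((P l k)⁻¹ * (x⁻¹ * (P κ₀ i)⁻¹ * P κ₀ j * y) * P m k) * v⁻¹) := by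
    group
  rwa [e1, e2] at h2


instance ND_normal_inst : (ND P i₀ κ₀ hρ).Normal := ND_normal P i₀ κ₀ hρ

lemma RI_sub_ThI {i j : I} (h : RI ρ i j) :
    ThI P κ₀ (ND P i₀ κ₀ hρ) i j := by
  obtain ⟨x, l, y, m, h⟩ := h
  intro κ
  have hc1 : (((y * P m i₀ * (P l i₀)⁻¹ * x⁻¹ : G)) : G ⧸ ND P i₀ κ₀ hρ)
      = ((P κ j : G) : G ⧸ ND P i₀ κ₀ hρ)⁻¹ * ((P κ i : G) : G ⧸ ND P i₀ κ₀ hρ) :=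
    quot_c_eq _ (by simpa using Smem P i₀ κ₀ hρ h 1 κ)
  have hc2 : (((y * P m i₀ * (P l i₀)⁻¹ * x⁻¹ : G)) : G ⧸ ND P i₀ κ₀ hρ)
      = ((P κ₀ j : G) : G ⧸ ND P i₀ κ₀ hρ)⁻¹ * ((P κ₀ i : G) : G ⧸ ND P i₀ κ₀ hρ) :=
    quot_c_eq _ (by simpa using Smem P i₀ κ₀ hρ h 1 κ₀)
  rw [← hc1, ← hc2]

lemma RL_sub_ThL {l m : Λ} (h : RL ρ l m) :
    ThL P i₀ (ND P i₀ κ₀ hρ) l m := by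
  obtain ⟨i, x, j, y, h⟩ := h
  intro k
  have hd1 : (((x⁻¹ * (P κ₀ i)⁻¹ * P κ₀ j * y : G)) : G ⧸ ND P i₀ κ₀ hρ)
      = ((P l k : G) : G ⧸ ND P i₀ κ₀ hρ) * ((P m k : G) : G ⧸ ND P i₀ κ₀ hρ)⁻¹ :=
    quot_d_eq _ (by simpa using Smem' P i₀ κ₀ hρ h 1 k)
  have hd2 : (((x⁻¹ * (P κ₀ i)⁻¹ * P κ₀ j * y : G)) : G ⧸ ND P i₀ κ₀ hρ)
      = ((P l i₀ : G) : G ⧸ ND P i₀ κ₀ hρ) * ((P m i₀ : G) : G ⧸ ND P i₀ κ₀ hρ)⁻¹ :=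
    quot_d_eq _ (by simpa using Smem' P i₀ κ₀ hρ h 1 i₀)
  rw [← hd1, ← hd2]

lemma assemble {i j : I} {x y : G} {l m : Λ} (cc dd : G)
    (hA : ∀ w, ρ (i, w, κ₀) (j, cc * w, κ₀))
    (hC : ∀ w, ρ (i₀, w, l) (i₀, w * dd, m))
    (hn : x⁻¹ * cc⁻¹ * y * dd⁻¹ ∈ ND P i₀ κ₀ hρ) :
    ρ (i, x, l) (j, y, m) := by
  rw [mem_ND_iff] at hn
  have s1 := hρ.2 _ _ _ _ (hA x) hn
  simp only [rmul] at s1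
  have s2 := hρ.2 _ _ _ _ s1 (hC ((P κ₀ i₀)⁻¹))
  simp only [rmul] at s2
  have e1 : x * P κ₀ i₀ * (P κ₀ i₀)⁻¹ * P κ₀ i₀ * (P κ₀ i₀)⁻¹ = x := by group
  have e2 : cc * x * P κ₀ i₀ * ((P κ₀ i₀)⁻¹ * (x⁻¹ * cc⁻¹ * y * dd⁻¹)) * P κ₀ i₀
      * ((P κ₀ i₀)⁻¹ * dd) = y := by group
  rwa [e1, e2] at s2

/-- Main classification: a diagonal subsemigroup is determined by `(N, R_I, R_Λ)`. -/
lemma mc {i j : I} {x y : G} {l m : Λ} :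
    ρ (i, x, l) (j, y, m)
      ↔ RI ρ i j ∧ RL ρ l m ∧
        Fm P i₀ κ₀ (ND P i₀ κ₀ hρ) (i, x, l) = Fm P i₀ κ₀ (ND P i₀ κ₀ hρ) (j, y, m) := by
  constructor
  · intro h
    refine ⟨⟨x, l, y, m, h⟩, ⟨i, x, j, y, h⟩, ?_⟩
    have hc : (((y * P m i₀ * (P l i₀)⁻¹ * x⁻¹ : G)) : G ⧸ ND P i₀ κ₀ hρ)
        = ((P κ₀ j : G) : G ⧸ ND P i₀ κ₀ hρ)⁻¹ * ((P κ₀ i : G) : G ⧸ ND P i₀ κ₀ hρ) :=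
      quot_c_eq _ (by simpa using Smem P i₀ κ₀ hρ h 1 κ₀)
    simp only [Fm, QuotientGroup.mk_mul] at hc ⊢
    simp only [QuotientGroup.mk_inv] at hc
    have ey : ((y : G) : G ⧸ ND P i₀ κ₀ hρ)
        = (((y : G) : G ⧸ ND P i₀ κ₀ hρ) * ((P m i₀ : G) : G ⧸ ND P i₀ κ₀ hρ)
            * ((P l i₀ : G) : G ⧸ ND P i₀ κ₀ hρ)⁻¹ * ((x : G) : G ⧸ ND P i₀ κ₀ hρ)⁻¹)
          * x * P l i₀ * ((P m i₀ : G) : G ⧸ ND P i₀ κ₀ hρ)⁻¹ := by group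
    rw [hc] at ey
    rw [ey]; group
  · rintro ⟨hij, hlm, hF⟩
    obtain ⟨x₁, l₁, y₁, m₁, h1⟩ := hij
    obtain ⟨i₂, x₂, j₂, y₂, h2⟩ := hlm
    have hc : (((y₁ * P m₁ i₀ * (P l₁ i₀)⁻¹ * x₁⁻¹ : G)) : G ⧸ ND P i₀ κ₀ hρ)
        = ((P κ₀ j : G) : G ⧸ ND P i₀ κ₀ hρ)⁻¹ * ((P κ₀ i : G) : G ⧸ ND P i₀ κ₀ hρ) :=
      quot_c_eq _ (by simpa using Smem P i₀ κ₀ hρ h1 1 κ₀)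
    have hd : (((x₂⁻¹ * (P κ₀ i₂)⁻¹ * P κ₀ j₂ * y₂ : G)) : G ⧸ ND P i₀ κ₀ hρ)
        = ((P l i₀ : G) : G ⧸ ND P i₀ κ₀ hρ) * ((P m i₀ : G) : G ⧸ ND P i₀ κ₀ hρ)⁻¹ :=
      quot_d_eq _ (by simpa using Smem' P i₀ κ₀ hρ h2 1 i₀)
    refine assemble P i₀ κ₀ hρ _ _ (fun w => S1 P i₀ κ₀ hρ h1 κ₀ w)
      (fun w => S1' P i₀ κ₀ hρ h2 i₀ w) ?_
    rw [← QuotientGroup.eq_one_iff]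
    simp only [Fm, QuotientGroup.mk_mul] at hF
    have ey : ((y : G) : G ⧸ ND P i₀ κ₀ hρ)
        = ((P κ₀ j : G) : G ⧸ ND P i₀ κ₀ hρ)⁻¹
          * (((P κ₀ j : G) : G ⧸ ND P i₀ κ₀ hρ) * y * ((P m i₀ : G) : G ⧸ ND P i₀ κ₀ hρ))
          * ((P m i₀ : G) : G ⧸ ND P i₀ κ₀ hρ)⁻¹ := by group
    rw [← hF] at ey
    simp only [QuotientGroup.mk_mul, QuotientGroup.mk_inv]
    simp only [QuotientGroup.mk_mul, QuotientGroup.mk_inv] at hc hd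
    rw [ey, hc, hd]
    group


end diag
end core

section recover
variable {I Λ G : Type*} [Group G] (P : Λ → I → G) (i₀ : I) (κ₀ : Λ)
variable (N : Subgroup G) [N.Normal] {ε : I → I → Prop} {δ : Λ → Λ → Prop}

lemma ThI_congr {N N' : Subgroup G} (hNN : N = N') [hN : N.Normal] [hN' : N'.Normal] :
    ThI P κ₀ N = ThI P κ₀ N' := by subst hNN; rfl

lemma ThL_congr {N N' : Subgroup G} (hNN : N = N') [hN : N.Normal] [hN' : N'.Normal] :
    ThL P i₀ N = ThL P i₀ N' := by subst hNN; rfl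

lemma crel_N_iff (hε0 : ε i₀ i₀) (hδ0 : δ κ₀ κ₀) (n : G) :
    crel P i₀ κ₀ N ε δ (i₀, (P κ₀ i₀)⁻¹ * n * (P κ₀ i₀)⁻¹, κ₀)
      (i₀, (P κ₀ i₀)⁻¹ * 1 * (P κ₀ i₀)⁻¹, κ₀) ↔ n ∈ N := by
  simp only [crel, Fm]
  rw [show P κ₀ i₀ * ((P κ₀ i₀)⁻¹ * n * (P κ₀ i₀)⁻¹) * P κ₀ i₀ = n from by group,
      show P κ₀ i₀ * ((P κ₀ i₀)⁻¹ * 1 * (P κ₀ i₀)⁻¹) * P κ₀ i₀ = 1 from by group]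
  constructor
  · rintro ⟨-, -, hF⟩
    rw [← QuotientGroup.eq_one_iff]
    exact hF.trans (QuotientGroup.mk_one N)
  · intro hn
    exact ⟨hε0, hδ0, ((QuotientGroup.eq_one_iff n).mpr hn).trans (QuotientGroup.mk_one N).symm⟩

lemma crel_eps_iff (hδ0 : δ κ₀ κ₀) (i j : I) :
    crel P i₀ κ₀ N ε δ (i, (P κ₀ i)⁻¹, κ₀) (j, (P κ₀ j)⁻¹, κ₀) ↔ ε i j := by
  simp only [crel, Fm]
  constructor
  · exact fun h => h.1
  · intro h
    refine ⟨h, hδ0, ?_⟩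
    rw [show P κ₀ i * (P κ₀ i)⁻¹ * P κ₀ i₀ = P κ₀ i₀ from by group,
        show P κ₀ j * (P κ₀ j)⁻¹ * P κ₀ i₀ = P κ₀ i₀ from by group]

lemma crel_del_iff (hε0 : ε i₀ i₀) (l m : Λ) :
    crel P i₀ κ₀ N ε δ (i₀, (P κ₀ i₀)⁻¹ * (P l i₀)⁻¹, l)
      (i₀, (P κ₀ i₀)⁻¹ * (P m i₀)⁻¹, m) ↔ δ l m := by
  simp only [crel, Fm]
  constructor
  · exact fun h => h.2.1
  · intro h
    refine ⟨hε0, h, ?_⟩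
    rw [show P κ₀ i₀ * ((P κ₀ i₀)⁻¹ * (P l i₀)⁻¹) * P l i₀ = 1 from by group,
        show P κ₀ i₀ * ((P κ₀ i₀)⁻¹ * (P m i₀)⁻¹) * P m i₀ = 1 from by group]

end recover

def andEquiv {α : Type*} {r s : α → α → Prop} (hr : Equivalence r) (hs : Equivalence s) :
    Equivalence (fun a b => r a b ∧ s a b) :=
  ⟨fun a => ⟨hr.refl a, hs.refl a⟩, fun h => ⟨hr.symm h.1, hs.symm h.2⟩,
    fun h h' => ⟨hr.trans h.1 h'.1, hs.trans h.2 h'.2⟩⟩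

section inj
variable {I Λ G : Type*} [Group G] [Fintype G] (P : Λ → I → G) (i₀ : I) (κ₀ : Λ)

/-- The key injection `Diag × Eq × Eq ↪ Cong × Refl × Refl`. -/
def Jmap (t : {ρ : (I × G × Λ) → (I × G × Λ) → Prop // IsDiagonal (rmul P) ρ} ×
      {r : I → I → Prop // Equivalence r} × {r : Λ → Λ → Prop // Equivalence r}) :
    {ρ : (I × G × Λ) → (I × G × Λ) → Prop // IsCongruence (rmul P) ρ} ×
      {r : I → I → Prop // Reflexive r} × {r : Λ → Λ → Prop // Reflexive r} :=
  ⟨⟨crel P i₀ κ₀ (ND P i₀ κ₀ t.1.2)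
      (fun i j => t.2.1.1 i j ∧ ThI P κ₀ (ND P i₀ κ₀ t.1.2) i j)
      (fun l m => t.2.2.1 l m ∧ ThL P i₀ (ND P i₀ κ₀ t.1.2) l m),
    crel_isCongruence P i₀ κ₀ _ (andEquiv t.2.1.2 (thI_equiv P κ₀ _))
      (andEquiv t.2.2.2 (thL_equiv P i₀ _)) (fun _ _ h => h.2) (fun _ _ h => h.2)⟩,
   ⟨fun i j => RI t.1.1 i j ∨ (t.2.1.1 i j ∧ ¬ ThI P κ₀ (ND P i₀ κ₀ t.1.2) i j),
    fun i => Or.inl (RI_refl P i₀ κ₀ t.1.2 i)⟩,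
   ⟨fun l m => RL t.1.1 l m ∨ (t.2.2.1 l m ∧ ¬ ThL P i₀ (ND P i₀ κ₀ t.1.2) l m),
    fun l => Or.inl (RL_refl P i₀ κ₀ t.1.2 l)⟩⟩

lemma Jmap_inj : Function.Injective (Jmap P i₀ κ₀) := by
  rintro ⟨⟨ρ, hρ⟩, ⟨ε, hε⟩, ⟨δ, hδ⟩⟩ ⟨⟨ρ', hρ'⟩, ⟨ε', hε'⟩, ⟨δ', hδ'⟩⟩ h
  have hK := congrArg (fun z => z.1.1) h
  have hA := congrArg (fun z => z.2.1.1) h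
  have hB := congrArg (fun z => z.2.2.1) h
  simp only [Jmap] at hK hA hB
  have hN : ND P i₀ κ₀ hρ = ND P i₀ κ₀ hρ' := by
    ext n
    have h1 := congrFun (congrFun hK (i₀, (P κ₀ i₀)⁻¹ * n * (P κ₀ i₀)⁻¹, κ₀))
      (i₀, (P κ₀ i₀)⁻¹ * 1 * (P κ₀ i₀)⁻¹, κ₀)
    rw [crel_N_iff P i₀ κ₀ _ ⟨hε.refl i₀, (thI_equiv P κ₀ _).refl i₀⟩
          ⟨hδ.refl κ₀, (thL_equiv P i₀ _).refl κ₀⟩ n,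
        crel_N_iff P i₀ κ₀ _ ⟨hε'.refl i₀, (thI_equiv P κ₀ _).refl i₀⟩
          ⟨hδ'.refl κ₀, (thL_equiv P i₀ _).refl κ₀⟩ n] at h1
    exact iff_of_eq h1
  have hTh : ThI P κ₀ (ND P i₀ κ₀ hρ) = ThI P κ₀ (ND P i₀ κ₀ hρ') := ThI_congr P κ₀ hN
  have hThL : ThL P i₀ (ND P i₀ κ₀ hρ) = ThL P i₀ (ND P i₀ κ₀ hρ') := ThL_congr P i₀ hN
  have hEps : ∀ i j, (ε i j ∧ ThI P κ₀ (ND P i₀ κ₀ hρ) i j)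
      ↔ (ε' i j ∧ ThI P κ₀ (ND P i₀ κ₀ hρ') i j) := by
    intro i j
    have h1 := congrFun (congrFun hK (i, (P κ₀ i)⁻¹, κ₀)) (j, (P κ₀ j)⁻¹, κ₀)
    rw [crel_eps_iff P i₀ κ₀ _ ⟨hδ.refl κ₀, (thL_equiv P i₀ _).refl κ₀⟩ i j,
        crel_eps_iff P i₀ κ₀ _ ⟨hδ'.refl κ₀, (thL_equiv P i₀ _).refl κ₀⟩ i j] at h1
    exact iff_of_eq h1
  have hDel : ∀ l m, (δ l m ∧ ThL P i₀ (ND P i₀ κ₀ hρ) l m)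
      ↔ (δ' l m ∧ ThL P i₀ (ND P i₀ κ₀ hρ') l m) := by
    intro l m
    have h1 := congrFun (congrFun hK (i₀, (P κ₀ i₀)⁻¹ * (P l i₀)⁻¹, l))
      (i₀, (P κ₀ i₀)⁻¹ * (P m i₀)⁻¹, m)
    rw [crel_del_iff P i₀ κ₀ _ ⟨hε.refl i₀, (thI_equiv P κ₀ _).refl i₀⟩ l m,
        crel_del_iff P i₀ κ₀ _ ⟨hε'.refl i₀, (thI_equiv P κ₀ _).refl i₀⟩ l m] at h1
    exact iff_of_eq h1
  have hRIiff : ∀ i j, RI ρ i j ↔ RI ρ' i j := by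
    intro i j
    have h1 := congrFun (congrFun hA i) j
    constructor
    · intro hr
      have h2 : RI ρ i j ∨ (ε i j ∧ ¬ ThI P κ₀ (ND P i₀ κ₀ hρ) i j) := Or.inl hr
      rw [h1] at h2
      rcases h2 with h2 | h2
      · exact h2
      · have h3 := RI_sub_ThI P i₀ κ₀ hρ hr
        rw [hTh] at h3
        exact absurd h3 h2.2
    · intro hr
      have h2 : RI ρ' i j ∨ (ε' i j ∧ ¬ ThI P κ₀ (ND P i₀ κ₀ hρ') i j) := Or.inl hr
      rw [← h1] at h2
      rcases h2 with h2 | h2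
      · exact h2
      · have h3 := RI_sub_ThI P i₀ κ₀ hρ' hr
        rw [← hTh] at h3
        exact absurd h3 h2.2
  have hRLiff : ∀ l m, RL ρ l m ↔ RL ρ' l m := by
    intro l m
    have h1 := congrFun (congrFun hB l) m
    constructor
    · intro hr
      have h2 : RL ρ l m ∨ (δ l m ∧ ¬ ThL P i₀ (ND P i₀ κ₀ hρ) l m) := Or.inl hr
      rw [h1] at h2
      rcases h2 with h2 | h2
      · exact h2
      · have h3 := RL_sub_ThL P i₀ κ₀ hρ hr
        rw [hThL] at h3
        exact absurd h3 h2.2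
    · intro hr
      have h2 : RL ρ' l m ∨ (δ' l m ∧ ¬ ThL P i₀ (ND P i₀ κ₀ hρ') l m) := Or.inl hr
      rw [← h1] at h2
      rcases h2 with h2 | h2
      · exact h2
      · have h3 := RL_sub_ThL P i₀ κ₀ hρ' hr
        rw [← hThL] at h3
        exact absurd h3 h2.2
  have hRIeq : RI ρ = RI ρ' := funext fun i => funext fun j => propext (hRIiff i j)
  have hRLeq : RL ρ = RL ρ' := funext fun l => funext fun m => propext (hRLiff l m)
  have hρeq : ρ = ρ' := by
    funext s t
    obtain ⟨si, sx, sl⟩ := s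
    obtain ⟨ti, tx, tl⟩ := t
    apply propext
    rw [mc P i₀ κ₀ hρ, mc P i₀ κ₀ hρ', hN, hRIeq, hRLeq]
  have hεeq : ε = ε' := by
    funext i j
    apply propext
    by_cases hth : ThI P κ₀ (ND P i₀ κ₀ hρ) i j
    · have hth' : ThI P κ₀ (ND P i₀ κ₀ hρ') i j := by rw [← hTh]; exact hth
      exact ⟨fun he => ((hEps i j).mp ⟨he, hth⟩).1, fun he => ((hEps i j).mpr ⟨he, hth'⟩).1⟩
    · have hth' : ¬ ThI P κ₀ (ND P i₀ κ₀ hρ') i j := by rw [← hTh]; exact hth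
      have h1 := congrFun (congrFun hA i) j
      constructor
      · intro he
        have h2 : RI ρ i j ∨ (ε i j ∧ ¬ ThI P κ₀ (ND P i₀ κ₀ hρ) i j) := Or.inr ⟨he, hth⟩
        rw [h1] at h2
        rcases h2 with h2 | h2
        · exact absurd (RI_sub_ThI P i₀ κ₀ hρ' h2) hth'
        · exact h2.1
      · intro he
        have h2 : RI ρ' i j ∨ (ε' i j ∧ ¬ ThI P κ₀ (ND P i₀ κ₀ hρ') i j) := Or.inr ⟨he, hth'⟩
        rw [← h1] at h2
        rcases h2 with h2 | h2
        · exact absurd (RI_sub_ThI P i₀ κ₀ hρ h2) hth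
        · exact h2.1
  have hδeq : δ = δ' := by
    funext l m
    apply propext
    by_cases hth : ThL P i₀ (ND P i₀ κ₀ hρ) l m
    · have hth' : ThL P i₀ (ND P i₀ κ₀ hρ') l m := by rw [← hThL]; exact hth
      exact ⟨fun he => ((hDel l m).mp ⟨he, hth⟩).1, fun he => ((hDel l m).mpr ⟨he, hth'⟩).1⟩
    · have hth' : ¬ ThL P i₀ (ND P i₀ κ₀ hρ') l m := by rw [← hThL]; exact hth
      have h1 := congrFun (congrFun hB l) m
      constructor
      · intro he
        have h2 : RL ρ l m ∨ (δ l m ∧ ¬ ThL P i₀ (ND P i₀ κ₀ hρ) l m) := Or.inr ⟨he, hth⟩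
        rw [h1] at h2
        rcases h2 with h2 | h2
        · exact absurd (RL_sub_ThL P i₀ κ₀ hρ' h2) hth'
        · exact h2.1
      · intro he
        have h2 : RL ρ' l m ∨ (δ' l m ∧ ¬ ThL P i₀ (ND P i₀ κ₀ hρ') l m) := Or.inr ⟨he, hth'⟩
        rw [← h1] at h2
        rcases h2 with h2 | h2
        · exact absurd (RL_sub_ThL P i₀ κ₀ hρ h2) hth
        · exact h2.1
  subst hρeq hεeq hδeq
  rfl


end inj

section count

def setoidCongr {α β : Type*} (e : α ≃ β) : Setoid α ≃ Setoid β where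
  toFun s := ⟨fun x y => s.r (e.symm x) (e.symm y),
    ⟨fun x => s.refl' _, fun h => s.symm' h, fun h h' => s.trans' h h'⟩⟩
  invFun s := ⟨fun x y => s.r (e x) (e y),
    ⟨fun x => s.refl' _, fun h => s.symm' h, fun h h' => s.trans' h h'⟩⟩
  left_inv s := Setoid.ext fun x y => by
    show s.r (e.symm (e x)) (e.symm (e y)) ↔ s.r x y; simp
  right_inv s := Setoid.ext fun x y => by
    show s.r (e (e.symm x)) (e (e.symm y)) ↔ s.r x y; simp

lemma card_equivRel (α : Type*) [Fintype α] :
    Nat.card {r : α → α → Prop // Equivalence r} = bell (Fintype.card α) := by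
  rw [bell]
  refine Nat.card_congr ?_
  exact (⟨fun p => ⟨p.1, p.2⟩, fun s => ⟨s.r, s.iseqv⟩, fun p => rfl, fun s => rfl⟩ :
      {r : α → α → Prop // Equivalence r} ≃ Setoid α).trans (setoidCongr (Fintype.equivFin α))

lemma card_reflRel (α : Type*) [Fintype α] :
    Nat.card {r : α → α → Prop // Reflexive r}
      = 2 ^ (Fintype.card α ^ 2 - Fintype.card α) := by
  classical
  have e : {r : α → α → Prop // Reflexive r} ≃ ({p : α × α // ¬ p.1 = p.2} → Prop) :=
    { toFun := fun r p => r.1 p.1.1 p.1.2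
      invFun := fun f => ⟨fun i j => if h : i = j then True else f ⟨(i, j), h⟩,
        fun i => by simp⟩
      left_inv := fun r => Subtype.ext (funext fun i => funext fun j => by
        by_cases h : i = j
        · subst h
          simp only [dif_pos]
          exact (eq_true (r.2 i)).symm
        · simp only [dif_neg h])
      right_inv := fun f => funext fun p => by simp only [dif_neg p.2] }
  rw [Nat.card_congr (e.trans (Equiv.arrowCongr (Equiv.refl _) Equiv.propEquivBool))]
  rw [Nat.card_fun]
  have hb : Nat.card Bool = 2 := by rw [Nat.card_eq_fintype_card]; rfl
  have hsub : Nat.card {p : α × α // ¬ p.1 = p.2}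
      = Fintype.card α ^ 2 - Fintype.card α := by
    rw [Nat.card_eq_fintype_card]
    have h1 : Fintype.card {p : α × α // ¬ p.1 = p.2}
        = Fintype.card (α × α) - Fintype.card {p : α × α // p.1 = p.2} :=
      Fintype.card_subtype_compl _
    have h2 : Fintype.card {p : α × α // p.1 = p.2} = Fintype.card α :=
      Fintype.card_congr ⟨fun q => q.1.1, fun i => ⟨(i, i), rfl⟩,
        fun q => Subtype.ext (Prod.ext rfl q.2), fun i => rfl⟩
    rw [h1, h2, Fintype.card_prod, sq]
  rw [hb, hsub]

lemma card_cong_lt_card_diag {I Λ G : Type*} [Fintype I] [Fintype Λ] [Group G] [Fintype G]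
    (P : Λ → I → G) (a₀ a₁ : I) (hne : a₀ ≠ a₁) (κ₀ : Λ) :
    Nat.card {ρ : (I × G × Λ) → (I × G × Λ) → Prop // IsCongruence (rmul P) ρ}
      < Nat.card {ρ : (I × G × Λ) → (I × G × Λ) → Prop // IsDiagonal (rmul P) ρ} := by
  classical
  set Cset : Set ((I × G × Λ) → (I × G × Λ) → Prop) := {ρ | IsCongruence (rmul P) ρ} with hC
  set Dset : Set ((I × G × Λ) → (I × G × Λ) → Prop) := {ρ | IsDiagonal (rmul P) ρ} with hD
  have e1 : {ρ : (I × G × Λ) → (I × G × Λ) → Prop // IsCongruence (rmul P) ρ} ≃ ↥Cset :=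
    Equiv.subtypeEquivRight (fun x => Iff.rfl)
  have e2 : {ρ : (I × G × Λ) → (I × G × Λ) → Prop // IsDiagonal (rmul P) ρ} ≃ ↥Dset :=
    Equiv.subtypeEquivRight (fun x => Iff.rfl)
  rw [Nat.card_congr e1, Nat.card_congr e2, Nat.card_coe_set_eq,
    Nat.card_coe_set_eq]
  refine Set.ncard_lt_ncard ?_ (Set.toFinite Dset)
  have hsub : Cset ⊆ Dset := fun ρ hρ => ⟨fun s => hρ.1.refl s, hρ.2⟩
  have hmem : (fun s t : I × G × Λ => (s.1 = t.1 ∨ (s.1 = a₀ ∧ t.1 = a₁)) ∧ s.2.2 = t.2.2)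
      ∈ Dset := by
    refine ⟨fun s => ⟨Or.inl rfl, rfl⟩, ?_⟩
    rintro u v w z hu hw
    exact ⟨hu.1, hw.2⟩
  have hnot : (fun s t : I × G × Λ => (s.1 = t.1 ∨ (s.1 = a₀ ∧ t.1 = a₁)) ∧ s.2.2 = t.2.2)
      ∉ Cset := by
    intro hc
    have h1 : (fun s t : I × G × Λ => (s.1 = t.1 ∨ (s.1 = a₀ ∧ t.1 = a₁)) ∧ s.2.2 = t.2.2)
        (a₀, (1 : G), κ₀) (a₁, (1 : G), κ₀) := ⟨Or.inr ⟨rfl, rfl⟩, rfl⟩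
    have h2 := hc.1.symm h1
    rcases h2.1 with h | h
    · exact hne h.symm
    · exact hne h.2
  exact ⟨hsub, fun hsub' => hnot (hsub' hmem)⟩

end count
end DSC


/-- For a finite Rees matrix semigroup with `|I| = a > 1`, `|Λ| = b > 1`:
`B(a)B(b)/(2^(a²−a) 2^(b²−b)) ≤ χ(M[G;I,Λ;P]) < 1`. -/
theorem stmt15 {I Λ : Type*} [Fintype I] [Fintype Λ] (a b : ℕ)
    (ha : Fintype.card I = a) (hb : Fintype.card Λ = b)
    (ha1 : 1 < a) (hb1 : 1 < b)
    (G : Type*) [Group G] [Fintype G] (P : Λ → I → G) :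
    ((bell a : ℚ) * bell b) / (2 ^ (a ^ 2 - a) * 2 ^ (b ^ 2 - b)) ≤ chi (rmul P) ∧
    chi (rmul P) < 1 := by
  classical
  have hInt : Nontrivial I := Fintype.one_lt_card_iff_nontrivial.mp (by omega)
  have hLnt : Nontrivial Λ := Fintype.one_lt_card_iff_nontrivial.mp (by omega)
  obtain ⟨i₀⟩ : Nonempty I := inferInstance
  obtain ⟨κ₀⟩ : Nonempty Λ := inferInstance
  obtain ⟨a₀, a₁, hne⟩ := exists_pair_ne I
  have hcard := Nat.card_le_card_of_injective _ (DSC.Jmap_inj P i₀ κ₀)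
  rw [Nat.card_prod, Nat.card_prod, Nat.card_prod, Nat.card_prod,
    DSC.card_equivRel I, DSC.card_equivRel Λ, DSC.card_reflRel I, DSC.card_reflRel Λ,
    ha, hb] at hcard
  have hlt := DSC.card_cong_lt_card_diag P a₀ a₁ hne κ₀
  have hD0 : 0 < Nat.card {ρ : (I × G × Λ) → (I × G × Λ) → Prop // IsDiagonal (rmul P) ρ} :=
    lt_of_le_of_lt (Nat.zero_le _) hlt
  constructor
  · rw [chi, div_le_div_iff₀ (by positivity) (by exact_mod_cast hD0)]
    have h2 : (bell a * bell b) *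
        Nat.card {ρ : (I × G × Λ) → (I × G × Λ) → Prop // IsDiagonal (rmul P) ρ}
        ≤ Nat.card {ρ : (I × G × Λ) → (I × G × Λ) → Prop // IsCongruence (rmul P) ρ}
          * (2 ^ (a ^ 2 - a) * 2 ^ (b ^ 2 - b)) := by
      rw [mul_comm (bell a * bell b)]
      exact hcard
    exact_mod_cast h2
  · rw [chi, div_lt_one (by exact_mod_cast hD0)]
    exact_mod_cast hlt
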